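/- Let |Y| = c ≥ 2 and let M_unif(y)(s) = 1/(2^{c−1} − 1) if y ∈ s and s ≠ Y, and 0 otherwise. Then for every Q ∈ Δ(Y) and all labels i, j ∈ Y, the bag frequencies F(y) = Σ_{s ∈ S, y ∈ s} Σ_{y'} Q(y')·M_unif(y')(s) satisfy the exact identity F(i) − F(j) = α·(Q(i) − Q(j)), where α = 2^{c−2}/(2^{c−1} − 1) > 0. -/
import Mathlib

/-- A probability vector on a finite type `T`. -/
def IsProbVec {T : Type*} [Fintype T] (Q : T → ℝ) : Prop :=
  (∀ t, 0 ≤ Q t) ∧ ∑ t, Q t = 1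

/-- The bag frequency of label `y` under kernel `M` and label distribution `Q`. -/
def bagFreq {Y : Type*} [Fintype Y] [DecidableEq Y]
    (M : Y → Finset Y → ℝ) (Q : Y → ℝ) (y : Y) : ℝ :=
  ∑ s ∈ Finset.univ.filter (fun s : Finset Y => y ∈ s), ∑ y', Q y' * M y' s

/-- The uniform bag generation model of Feng et al. -/
noncomputable def Munif (Y : Type*) [Fintype Y] [DecidableEq Y] :
    Y → Finset Y → ℝ :=
  fun y s => if y ∈ s ∧ s ≠ Finset.univ
    then 1 / ((2 : ℝ) ^ (Fintype.card Y - 1) - 1) else 0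

lemma card_supersets {Y : Type*} [Fintype Y] [DecidableEq Y] (t : Finset Y) :
    (Finset.univ.filter (fun s : Finset Y => t ⊆ s)).card =
      2 ^ (Fintype.card Y - t.card) := by
  rw [← Finset.card_compl t, ← Finset.card_powerset]
  apply Finset.card_bij' (fun s _ => s \ t) (fun u _ => u ∪ t)
  · intro s hs
    simp only [Finset.mem_powerset]
    intro a ha
    simp only [Finset.mem_sdiff] at ha
    simp [Finset.mem_compl, ha.2]
  · intro u hu
    simp
  · intro s hs
    simp only [Finset.mem_filter, Finset.mem_univ, true_and] at hs
    simp [Finset.sdiff_union_of_subset hs]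
  · intro u hu
    simp only [Finset.mem_powerset] at hu
    have : Disjoint u t := Finset.disjoint_left.2 fun a ha => by
      have := hu ha; simp only [Finset.mem_compl] at this; exact this
    rw [Finset.union_sdiff_cancel_right this]

lemma count_ne_univ {Y : Type*} [Fintype Y] [DecidableEq Y] (y y' : Y) :
    ((Finset.univ.filter
        (fun s : Finset Y => y ∈ s ∧ y' ∈ s ∧ s ≠ Finset.univ)).card : ℝ) =
      2 ^ (Fintype.card Y - ({y, y'} : Finset Y).card) - 1 := by
  have hset : Finset.univ.filter
      (fun s : Finset Y => y ∈ s ∧ y' ∈ s ∧ s ≠ Finset.univ) =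
      (Finset.univ.filter (fun s : Finset Y => ({y, y'} : Finset Y) ⊆ s)).erase
        Finset.univ := by
    ext s
    simp only [Finset.mem_filter, Finset.mem_univ, true_and, Finset.mem_erase,
      Finset.insert_subset_iff, Finset.singleton_subset_iff]
    tauto
  rw [hset, Finset.card_erase_of_mem (by simp), card_supersets]
  have : 1 ≤ 2 ^ (Fintype.card Y - ({y, y'} : Finset Y).card) :=
    Nat.one_le_two_pow
  push_cast [this]
  ring

lemma bagFreq_munif {Y : Type*} [Fintype Y] [DecidableEq Y] (Q : Y → ℝ) (y : Y) :
    bagFreq (Munif Y) Q y =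
      ∑ y', Q y' * (((2 : ℝ) ^ (Fintype.card Y - ({y, y'} : Finset Y).card) - 1) /
        ((2 : ℝ) ^ (Fintype.card Y - 1) - 1)) := by
  unfold bagFreq Munif
  rw [Finset.sum_comm]
  refine Finset.sum_congr rfl fun y' _ => ?_
  rw [← Finset.mul_sum]
  congr 1
  rw [← Finset.sum_filter, Finset.filter_filter, Finset.sum_const, nsmul_eq_mul,
    count_ne_univ y y']
  ring

/-- For the uniform model of Feng et al., the bag frequencies preserve differences
of label probabilities up to the positive scalar
`α = 2^{c-2} / (2^{c-1} - 1)`:  `F i - F j = α (Q i - Q j)`. -/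
theorem feng_uniform_frequency_identity
    {Y : Type*} [Fintype Y] [DecidableEq Y] (hY : 2 ≤ Fintype.card Y)
    (Q : Y → ℝ) (hQ : IsProbVec Q) (i j : Y) :
    bagFreq (Munif Y) Q i - bagFreq (Munif Y) Q j =
      ((2 : ℝ) ^ (Fintype.card Y - 2) / ((2 : ℝ) ^ (Fintype.card Y - 1) - 1)) *
        (Q i - Q j) ∧
    0 < (2 : ℝ) ^ (Fintype.card Y - 2) / ((2 : ℝ) ^ (Fintype.card Y - 1) - 1) := by
  set c := Fintype.card Y with hc
  have hD : (1 : ℝ) < 2 ^ (c - 1) := by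
    calc (1 : ℝ) < 2 ^ 1 := by norm_num
    _ ≤ 2 ^ (c - 1) := by
      apply pow_le_pow_right₀ (by norm_num) (by omega)
  have hpos : 0 < (2 : ℝ) ^ (c - 2) / ((2 : ℝ) ^ (c - 1) - 1) :=
    div_pos (by positivity) (by linarith)
  refine ⟨?_, hpos⟩
  by_cases hij : i = j
  · subst hij; simp
  rw [bagFreq_munif, bagFreq_munif, ← Finset.sum_sub_distrib]
  set f : Y → ℝ := fun y' =>
    Q y' * (((2 : ℝ) ^ (c - ({i, y'} : Finset Y).card) - 1) /
        ((2 : ℝ) ^ (c - 1) - 1)) -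
    Q y' * (((2 : ℝ) ^ (c - ({j, y'} : Finset Y).card) - 1) /
        ((2 : ℝ) ^ (c - 1) - 1)) with hf
  have hzero : ∀ y' ∈ (Finset.univ : Finset Y), y' ∉ ({i, j} : Finset Y) →
      f y' = 0 := by
    intro y' _ hy'
    simp only [Finset.mem_insert, Finset.mem_singleton, not_or] at hy'
    have h1 : ({i, y'} : Finset Y).card = 2 := by
      rw [Finset.card_insert_of_notMem (by simp [Ne.symm hy'.1]),
        Finset.card_singleton]
    have h2 : ({j, y'} : Finset Y).card = 2 := by
      rw [Finset.card_insert_of_notMem (by simp [Ne.symm hy'.2]),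
        Finset.card_singleton]
    simp [hf, h1, h2]
  have hsum : ∑ y', f y' = ∑ y' ∈ ({i, j} : Finset Y), f y' :=
    (Finset.sum_subset (Finset.subset_univ _) hzero).symm
  rw [hsum, Finset.sum_pair hij]
  have hii : ({i, i} : Finset Y).card = 1 := by simp
  have hjj : ({j, j} : Finset Y).card = 1 := by simp
  have hij2 : ({i, j} : Finset Y).card = 2 := by
    rw [Finset.card_insert_of_notMem (by simp [hij]), Finset.card_singleton]
  have hji2 : ({j, i} : Finset Y).card = 2 := by
    rw [Finset.card_insert_of_notMem (by simp [Ne.symm hij]),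
      Finset.card_singleton]
  simp only [hf, hii, hjj, hij2, hji2]
  have hpow : (2 : ℝ) ^ (c - 1) = 2 ^ (c - 2) * 2 := by
    rw [← pow_succ]
    congr 1
    omega
  have hDne : ((2 : ℝ) ^ (c - 1) - 1) ≠ 0 := by linarith
  rw [hpow] at hDne ⊢
  field_simp
  ring
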